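/- In the Fermi-surface framework: let Q = Y_s + (1/2)Y² where Y is the geodesic unit Fermi field (so ∫Q dμ_P = 0 and ∫Q_s dμ_P = 0 on the surface, Q = g(t) + ∫₀^s q^t(r)dr with ∫q^t dμ_P = 0), and suppose ∫Y_t dμ_P = 0 on the surface. Then ∫ Q_t dμ_P = 0 on the surface, where Q_t = Y_{st} + Y Y_t. -/

import Mathlib

open MeasureTheory

private lemma intOfBdd {Ω : Type*} [MeasurableSpace Ω] (ν : Measure Ω) [IsFiniteMeasure ν]
    {f : Ω → ℝ} (hf : AEStronglyMeasurable f ν) (B : ℝ) (hB : ∀ x, |f x| ≤ B) :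
    Integrable f ν :=
  Integrable.mono' (integrable_const B) hf
    (Filter.Eventually.of_forall fun x => by simpa [Real.norm_eq_abs] using hB x)

private lemma bcfInt {Ω : Type*} [TopologicalSpace Ω] [MeasurableSpace Ω] (ν : MeasureTheory.Measure Ω)
    [IsFiniteMeasure ν] (C : BoundedContinuousFunction Ω ℝ)
    (h : AEStronglyMeasurable (fun x => C x) ν) : Integrable (fun x => C x) ν :=
  intOfBdd ν h ‖C‖ (fun x => by simpa [Real.norm_eq_abs] using C.norm_coe_le_norm x)

/- STATEMENT 17 -/
theorem stmt_17 {Ω : Type*} [TopologicalSpace Ω] [MeasurableSpace Ω]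
    (μ : ℝ → ℝ → Measure Ω) (hprob : ∀ t s, IsProbabilityMeasure (μ t s))
    (Yf Ys Yt Yst : ℝ → ℝ → BoundedContinuousFunction Ω ℝ)
    (hYs : ∀ t s : ℝ, HasDerivAt (fun u => Yf t u) (Ys t s) s)
    (hYt : ∀ t s : ℝ, HasDerivAt (fun u => Yf u s) (Yt t s) t)
    (hYts : ∀ t s : ℝ, HasDerivAt (fun u => Yt t u) (Yst t s) s)
    (hLeibS : ∀ t : ℝ, ∀ W W' : ℝ → BoundedContinuousFunction Ω ℝ,
      (∀ s, HasDerivAt W (W' s) s) → ∀ s : ℝ,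
        HasDerivAt (fun u => ∫ x, W u x ∂μ t u)
          (∫ x, W' s x ∂μ t s + ∫ x, W s x * Yf t s x ∂μ t s) s)
    (gq : ℝ → Ω → ℝ) (q : ℝ → ℝ → Ω → ℝ)
    (hQstruct : ∀ t s : ℝ, ∀ x : Ω,
      Ys t s x + (1 / 2) * (Yf t s x) ^ 2 = gq t x + ∫ r in (0 : ℝ)..s, q t r x)
    (hqmean : ∀ t s, ∫ x, q t s x ∂μ t s = 0)
    (hQmean : ∀ t s, ∫ x, (Ys t s x + (1 / 2) * (Yf t s x) ^ 2) ∂μ t s = 0)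
    (hQsmean : ∀ t s, ∫ x, q t s x ∂μ t s = 0)
    (hYtmean : ∀ t s, ∫ x, Yt t s x ∂μ t s = 0) :
    ∀ t s : ℝ, ∫ x, (Yst t s x + Yf t s x * Yt t s x) ∂μ t s = 0 := by
  intro t s
  haveI := hprob t s
  by_cases hD : AEStronglyMeasurable (fun x => Yst t s x + Yf t s x * Yt t s x) (μ t s)
  swap
  · exact integral_undef (fun h => hD h.1)
  have hDint : Integrable (fun x => Yst t s x + Yf t s x * Yt t s x) (μ t s) := by
    refine intOfBdd _ hD (‖Yst t s‖ + ‖Yf t s‖ * ‖Yt t s‖) (fun x => ?_)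
    calc |Yst t s x + Yf t s x * Yt t s x|
        ≤ |Yst t s x| + |Yf t s x * Yt t s x| := abs_add_le _ _
      _ ≤ ‖Yst t s‖ + ‖Yf t s‖ * ‖Yt t s‖ := by
          refine add_le_add (by simpa [Real.norm_eq_abs] using (Yst t s).norm_coe_le_norm x) ?_
          rw [abs_mul]
          exact mul_le_mul (by simpa [Real.norm_eq_abs] using (Yf t s).norm_coe_le_norm x)
            (by simpa [Real.norm_eq_abs] using (Yt t s).norm_coe_le_norm x)
            (abs_nonneg _) (norm_nonneg _)
  by_cases ha : AEStronglyMeasurable (fun x => Yst t s x) (μ t s)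
  · -- good case: everything splits
    have hcA : AEStronglyMeasurable (fun x => Yf t s x * Yt t s x) (μ t s) :=
      (hD.sub ha).congr (Filter.Eventually.of_forall fun x => by
        simp only [Pi.sub_apply]; ring)
    have haint : Integrable (fun x => Yst t s x) (μ t s) :=
      intOfBdd _ ha ‖Yst t s‖
        (fun x => by simpa [Real.norm_eq_abs] using (Yst t s).norm_coe_le_norm x)
    have hcint : Integrable (fun x => Yf t s x * Yt t s x) (μ t s) := by
      refine intOfBdd _ hcA (‖Yf t s‖ * ‖Yt t s‖) (fun x => ?_)
      rw [abs_mul]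
      exact mul_le_mul (by simpa [Real.norm_eq_abs] using (Yf t s).norm_coe_le_norm x)
        (by simpa [Real.norm_eq_abs] using (Yt t s).norm_coe_le_norm x)
        (abs_nonneg _) (norm_nonneg _)
    have hbasic := hLeibS t (fun u => Yt t u) (fun u => Yst t u) (hYts t) s
    have hzero : (fun u => ∫ x, Yt t u x ∂μ t u) = fun _ => (0 : ℝ) :=
      funext fun u => hYtmean t u
    rw [hzero] at hbasic
    have h0 := (hasDerivAt_const s (0 : ℝ)).unique hbasic
    rw [integral_add haint hcint]
    have e2 : (fun x => Yf t s x * Yt t s x) = fun x => Yt t s x * Yf t s x :=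
      funext fun x => mul_comm _ _
    rw [e2]
    linarith
  · -- strange case: derive a contradiction
    set G := ∫ x, (Yst t s x + Yf t s x * Yt t s x) ∂μ t s with hG
    set r : ℝ := 1 - G with hr
    set C : BoundedContinuousFunction Ω ℝ := Yf t s * Yt t s + BoundedContinuousFunction.const Ω r
      with hC
    -- C is not a.e. strongly measurable at s
    have hCnm : ¬ AEStronglyMeasurable (fun x => C x) (μ t s) := by
      intro h
      apply ha
      have e : (fun x => Yst t s x)
          = fun x => ((Yst t s x + Yf t s x * Yt t s x) + r) - C x := by
        funext x; simp [hC]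
      rw [e]
      exact (hD.add aestronglyMeasurable_const).sub h
    have hcnm : ¬ AEStronglyMeasurable (fun x => Yt t s x * Yf t s x) (μ t s) := by
      intro h
      apply ha
      have e : (fun x => Yst t s x)
          = fun x => (Yst t s x + Yf t s x * Yt t s x) - Yt t s x * Yf t s x := by
        funext x; ring
      rw [e]
      exact hD.sub h
    -- the two Leibniz families
    have hW₁ : ∀ u : ℝ, HasDerivAt (fun v => Yt t v + (v - s) • C) (Yst t u + C) u := by
      intro u
      have h1 : HasDerivAt (fun v : ℝ => v - s) 1 u := (hasDerivAt_id u).sub_const s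
      have h2 := h1.smul_const C
      have h4 := (hYts t u).add h2
      rw [one_smul] at h4
      exact h4
    have hW₂ : ∀ u : ℝ, HasDerivAt (fun v => Yt t v + ((v - s) + (v - s) ^ 2) • C)
        (Yst t u + (1 + 2 * (u - s)) • C) u := by
      intro u
      have h1 : HasDerivAt (fun v : ℝ => v - s) 1 u := (hasDerivAt_id u).sub_const s
      have h2 : HasDerivAt (fun v : ℝ => (v - s) + (v - s) ^ 2) (1 + 2 * (u - s)) u := by
        have h3 := h1.add (h1.pow 2)
        refine h3.congr_deriv ?_
        norm_num
      have h3 := h2.smul_const C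
      exact (hYts t u).add h3
    have h₁ := hLeibS t (fun v => Yt t v + (v - s) • C) (fun u => Yst t u + C) hW₁ s
    have h₂ := hLeibS t (fun v => Yt t v + ((v - s) + (v - s) ^ 2) • C)
      (fun u => Yst t u + (1 + 2 * (u - s)) • C) hW₂ s
    -- compute the derivative values
    have hI1 : ∫ x, (Yst t s + C) x ∂μ t s = 1 := by
      have e : (fun x => (Yst t s + C) x)
          = fun x => (Yst t s x + Yf t s x * Yt t s x) + r := by
        funext x; simp [hC]; ring
      rw [e, integral_add hDint (integrable_const r), integral_const]
      simp [hr, ← hG]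
    have hI1b : ∫ x, (Yst t s + (1 + 2 * (s - s)) • C) x ∂μ t s = 1 := by
      have e : (fun x => (Yst t s + (1 + 2 * (s - s)) • C) x)
          = fun x => (Yst t s x + Yf t s x * Yt t s x) + r := by
        funext x; simp [hC]; ring
      rw [e, integral_add hDint (integrable_const r), integral_const]
      simp [hr, ← hG]
    have hI2 : ∫ x, (Yt t s + ((s : ℝ) - s) • C) x * Yf t s x ∂μ t s = 0 := by
      have e : (fun x => (Yt t s + ((s : ℝ) - s) • C) x * Yf t s x)
          = fun x => Yt t s x * Yf t s x := by funext x; simp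
      rw [e]
      exact integral_undef (fun h => hcnm h.1)
    have hI2b : ∫ x, (Yt t s + (((s : ℝ) - s) + ((s : ℝ) - s) ^ 2) • C) x * Yf t s x ∂μ t s = 0 := by
      have e : (fun x => (Yt t s + (((s : ℝ) - s) + ((s : ℝ) - s) ^ 2) • C) x * Yf t s x)
          = fun x => Yt t s x * Yf t s x := by funext x; simp
      rw [e]
      exact integral_undef (fun h => hcnm h.1)
    simp only [hI1, hI2, add_zero] at h₁
    simp only [hI1b, hI2b, add_zero] at h₂
    -- h₁ : HasDerivAt F1 1 s, h₂ : HasDerivAt F2 1 s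
    have hFs : ∫ x, (Yt t s + ((s : ℝ) - s) • C) x ∂μ t s = 0 := by
      have e : (fun x => (Yt t s + ((s : ℝ) - s) • C) x) = fun x => Yt t s x := by
        funext x; simp
      rw [e]
      exact hYtmean t s
    have hF2s : ∫ x, (Yt t s + (((s : ℝ) - s) + ((s : ℝ) - s) ^ 2) • C) x ∂μ t s = 0 := by
      have e : (fun x => (Yt t s + (((s : ℝ) - s) + ((s : ℝ) - s) ^ 2) • C) x)
          = fun x => Yt t s x := by funext x; simp
      rw [e]
      exact hYtmean t s
    have hsl1 := hasDerivAt_iff_tendsto_slope.mp h₁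
    have hsl2 := hasDerivAt_iff_tendsto_slope.mp h₂
    -- eventually the slope of F1 equals ∫ C dμ t u
    have key : ∀ᶠ u in nhdsWithin s {s}ᶜ,
        slope (fun u => ∫ x, (Yt t u + (u - s) • C) x ∂μ t u) s u = ∫ x, C x ∂μ t u := by
      filter_upwards [hsl1.eventually_ne one_ne_zero, hsl2.eventually_ne one_ne_zero,
        self_mem_nhdsWithin] with u h1ne h2ne hus
      have hus' : u - s ≠ 0 := sub_ne_zero.mpr hus
      haveI := hprob t u
      have hF1u : (∫ x, (Yt t u + (u - s) • C) x ∂μ t u) ≠ 0 := by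
        intro h
        apply h1ne
        rw [slope_def_field, hFs, h, sub_zero, zero_div]
      have hF2u : (∫ x, (Yt t u + ((u - s) + (u - s) ^ 2) • C) x ∂μ t u) ≠ 0 := by
        intro h
        apply h2ne
        rw [slope_def_field, hF2s, h, sub_zero, zero_div]
      have hA1 : AEStronglyMeasurable (fun x => (Yt t u + (u - s) • C) x) (μ t u) := by
        by_contra h
        exact hF1u (integral_undef (fun hi => h hi.1))
      have hA2 : AEStronglyMeasurable
          (fun x => (Yt t u + ((u - s) + (u - s) ^ 2) • C) x) (μ t u) := by
        by_contra h
        exact hF2u (integral_undef (fun hi => h hi.1))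
      have hCu : AEStronglyMeasurable (fun x => C x) (μ t u) := by
        have hdiff : AEStronglyMeasurable (fun x => (u - s) ^ 2 * C x) (μ t u) :=
          (hA2.sub hA1).congr (Filter.Eventually.of_forall fun x => by
            simp only [Pi.sub_apply, BoundedContinuousFunction.coe_add,
              BoundedContinuousFunction.coe_smul, Pi.add_apply, Pi.smul_apply,
              smul_eq_mul]
            ring)
        have h2 := hdiff.const_smul (((u - s) ^ 2)⁻¹)
        refine h2.congr (Filter.Eventually.of_forall fun x => ?_)
        simp only [Pi.smul_apply, smul_eq_mul, ← mul_assoc]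
        rw [inv_mul_cancel₀ (pow_ne_zero 2 hus'), one_mul]
      have hYtu : AEStronglyMeasurable (fun x => Yt t u x) (μ t u) := by
        have h2 := hA1.sub (hCu.const_smul (u - s))
        refine h2.congr (Filter.Eventually.of_forall fun x => ?_)
        simp
      have hYtint : Integrable (fun x => Yt t u x) (μ t u) := bcfInt _ _ hYtu
      have hCint : Integrable (fun x => C x) (μ t u) := bcfInt _ _ hCu
      have hval : (∫ x, (Yt t u + (u - s) • C) x ∂μ t u)
          = (u - s) * ∫ x, C x ∂μ t u := by
        have e : (fun x => (Yt t u + (u - s) • C) x)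
            = fun x => Yt t u x + (u - s) * C x := by funext x; simp
        rw [e, integral_add hYtint (hCint.const_mul _), hYtmean t u, integral_const_mul,
          zero_add]
      rw [slope_def_field, hFs, sub_zero, hval]
      exact mul_div_cancel_left₀ _ hus'
    have hlim1 : Filter.Tendsto (fun u => ∫ x, C x ∂μ t u)
        (nhdsWithin s {s}ᶜ) (nhds 1) := hsl1.congr' key
    -- but u ↦ ∫ C dμ t u is continuous at s with value 0
    have hcont := hLeibS t (fun _ => C) (fun _ => 0) (fun u => hasDerivAt_const u C) s
    have hCs : (∫ x, C x ∂μ t s) = 0 := integral_undef (fun h => hCnm h.1)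
    have hlim2 : Filter.Tendsto (fun u => ∫ x, C x ∂μ t u)
        (nhdsWithin s {s}ᶜ) (nhds 0) := by
      have h2 := hcont.continuousAt.tendsto
      rw [hCs] at h2
      exact h2.mono_left nhdsWithin_le_nhds
    exact absurd (tendsto_nhds_unique hlim1 hlim2) one_ne_zero
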